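/- arXiv:2107.05296 — 6 statements merged into one kernel-verified Lean document; each statement's English description precedes it below -/
import Mathlib

section
/- Let T = (V,E) be a finite complete rooted binary tree and let X ⊆ V be a nonempty set. Then the minimum height of an element of the closure cl(X) equals the minimum height of an element of X, i.e. min-h(cl(X)) = min-h(X). -/
/-!
Vertices of the complete rooted binary tree of height `n` are modelled as
binary strings (lists of booleans) of length at most `n`: the root is the empty
list, and the two children of a vertex `x` (when `x.length < n`) are
`x ++ [true]` and `x ++ [false]`.  Leaves are the strings of length exactly `n`
and the height of a vertex is its distance to the leaves below it.
-/

/-- The ambient type of tree vertices: binary strings. -/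
abbrev V : Type := List Bool

/-- The vertex set of the complete binary tree of height `n`. -/
def treeSet (n : ℕ) : Set V := {l : V | l.length ≤ n}

/-- The height of a vertex: its distance to the leaves below it. -/
def hgt (n : ℕ) (v : V) : ℕ := n - v.length

/-- A set `X` is closed if, whenever two elements of a related triple
(a parent together with its two children) belong to `X`, so does the third. -/
def TripleClosed (n : ℕ) (X : Set V) : Prop :=
  ∀ x : V, x.length < n →
    ((x ∈ X → x ++ [true] ∈ X → x ++ [false] ∈ X) ∧
     (x ∈ X → x ++ [false] ∈ X → x ++ [true] ∈ X) ∧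
     (x ++ [true] ∈ X → x ++ [false] ∈ X → x ∈ X))

/-- The closure of `X`: the smallest closed subset of the tree containing `X`. -/
def cl (n : ℕ) (X : Set V) : Set V :=
  ⋂₀ {Y : Set V | X ⊆ Y ∧ Y ⊆ treeSet n ∧ TripleClosed n Y}

/-- `min-h(X)`: the minimum height of an element of `X`. -/
noncomputable def minh (n : ℕ) (X : Set V) : ℕ := sInf (hgt n '' X)

/-- `z` lies on the unique undirected path between `x` and `y`:
`z` is an ancestor of `x` or of `y`, and the longest common prefix of
`x` and `y` is an ancestor of `z`. -/
def OnPath (x y z : V) : Prop :=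
  (z <+: x ∨ z <+: y) ∧ ∀ w : V, w <+: x → w <+: y → w <+: z

/-- `X` is connected: it contains the undirected path between any two of its elements. -/
def Conn (X : Set V) : Prop :=
  ∀ x ∈ X, ∀ y ∈ X, ∀ z : V, OnPath x y z → z ∈ X

/-- `F` encloses `v`: every path from `v` down to a leaf contains an element of `F`. -/
def Encloses (n : ℕ) (F : Set V) (v : V) : Prop :=
  ∀ l : V, l.length = n → v <+: l → ∃ z ∈ F, v <+: z ∧ z <+: l

/-- `F` minimally encloses `v`. -/
def MinEncloses (n : ℕ) (F : Set V) (v : V) : Prop :=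
  Encloses n F v ∧ ∀ F' : Set V, F' ⊂ F → ¬ Encloses n F' v

/-- `r` is the head of `X`: an element of `X` of maximum height. -/
def IsHead (n : ℕ) (X : Set V) (r : V) : Prop :=
  r ∈ X ∧ ∀ y ∈ X, hgt n y ≤ hgt n r

/-- `Fr` is the frontier of the closed connected set `S` with head `x`:
`Fr ⊆ S` minimally encloses `x` and `S` consists exactly of the vertices lying
on the directed path from `x` to some element of `Fr`. -/
def IsFrontier (n : ℕ) (S Fr : Set V) (x : V) : Prop :=
  Fr ⊆ S ∧ MinEncloses n Fr x ∧ S = {z : V | ∃ f ∈ Fr, x <+: z ∧ z <+: f}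

/-- for a nonempty `X ⊆ V`, `min-h(cl(X)) = min-h(X)`. -/
theorem stmt_0 (n : ℕ) (X : Set V) (hX : X ⊆ treeSet n) (hne : X.Nonempty) :
    minh n (cl n X) = minh n X := by
  -- pick x0 ∈ X achieving the minimum height
  obtain ⟨x0, hx0X, hx0⟩ : ∃ x0 ∈ X, hgt n x0 = minh n X := by
    have h := Nat.sInf_mem (s := hgt n '' X) (hne.image _)
    obtain ⟨x0, hx0X, hx0⟩ := h
    exact ⟨x0, hx0X, hx0⟩
  have hx0n : x0.length ≤ n := hX hx0X
  -- X ⊆ cl X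
  have hXcl : X ⊆ cl n X := by
    intro x hx
    intro Y hY
    exact hY.1 hx
  -- the candidate closed set
  set Y0 : Set V := {v : V | v.length ≤ x0.length} with hY0
  have hXY0 : X ⊆ Y0 := by
    intro x hx
    have h1 : minh n X ≤ hgt n x := Nat.sInf_le ⟨x, hx, rfl⟩
    have h2 : x.length ≤ n := hX hx
    simp only [hY0, Set.mem_setOf_eq]
    have := hx0
    unfold hgt at *
    omega
  have hY0mem : Y0 ∈ {Y : Set V | X ⊆ Y ∧ Y ⊆ treeSet n ∧ TripleClosed n Y} := by
    refine ⟨hXY0, ?_, ?_⟩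
    · intro v hv
      simp only [hY0, Set.mem_setOf_eq] at hv
      exact le_trans hv hx0n
    · intro x hxn
      simp only [hY0, Set.mem_setOf_eq, List.length_append, List.length_cons,
        List.length_nil]
      omega
  have hclY0 : cl n X ⊆ Y0 := Set.sInter_subset_of_mem hY0mem
  apply le_antisymm
  · calc minh n (cl n X) ≤ hgt n x0 := Nat.sInf_le ⟨x0, hXcl hx0X, rfl⟩
      _ = minh n X := hx0
  · apply le_csInf ((hne.mono hXcl).image _)
    rintro b ⟨v, hv, rfl⟩
    have h1 : v.length ≤ x0.length := hclY0 hv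
    unfold hgt at *
    omega
end

section
/- Let T = (V,E) be a finite complete rooted binary tree and let X ⊆ V be a nonempty closed connected set. Then: (i) there is a unique element r ∈ X whose height equals the maximum height of an element of X (the 'head' of X); (ii) there is a subset F ⊆ X that minimally encloses r and is such that X is exactly the set of vertices lying on the directed path from r to some element of F (the 'frontier' of X); and (iii) for this F, cl(F) = X. -/
/-- Longest common prefix of two boolean lists. -/
def lcp : List Bool → List Bool → List Bool
  | a :: x, b :: y => if a = b then a :: lcp x y else []
  | _, _ => []

lemma lcp_prefix_left : ∀ x y : List Bool, lcp x y <+: x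
  | [], _ => by simp [lcp]
  | _ :: _, [] => by simp [lcp]
  | a :: x, b :: y => by
    by_cases h : a = b
    · simpa [lcp, h, List.cons_prefix_cons] using lcp_prefix_left x y
    · simp [lcp, h]

lemma lcp_prefix_right : ∀ x y : List Bool, lcp x y <+: y
  | [], _ => by simp [lcp]
  | _ :: _, [] => by simp [lcp]
  | a :: x, b :: y => by
    by_cases h : a = b
    · subst h; simpa [lcp, List.cons_prefix_cons] using lcp_prefix_right x y
    · simp [lcp, h]

lemma prefix_lcp : ∀ w x y : List Bool, w <+: x → w <+: y → w <+: lcp x y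
  | [], _, _, _, _ => List.nil_prefix
  | c :: w, [], _, h1, _ => absurd h1 (by simp)
  | c :: w, _ :: _, [], _, h2 => absurd h2 (by simp)
  | c :: w, a :: x, b :: y, h1, h2 => by
    rw [List.cons_prefix_cons] at h1 h2
    obtain ⟨rfl, h1⟩ := h1
    obtain ⟨rfl, h2⟩ := h2
    simpa [lcp, List.cons_prefix_cons] using prefix_lcp w x y h1 h2

/-- a nonempty closed connected set `X` has a unique head `r`
(the element of maximum height), and there is a frontier `F ⊆ X` which
minimally encloses `r`, such that `X` is exactly the set of vertices on the
directed paths from `r` to elements of `F`, and `cl(F) = X`. -/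
theorem stmt_1 (n : ℕ) (X : Set V) (hX : X ⊆ treeSet n) (hne : X.Nonempty)
    (hcl : TripleClosed n X) (hconn : Conn X) :
    (∃! r : V, IsHead n X r) ∧
    (∀ r : V, IsHead n X r →
      ∃ F : Set V, F ⊆ X ∧ MinEncloses n F r ∧
        X = {z : V | ∃ f ∈ F, r <+: z ∧ z <+: f} ∧ cl n F = X) := by
  classical
  have hlen : ∀ z ∈ X, z.length ≤ n := fun z hz => hX hz
  -- common prefixes of elements of X lie in X
  have hc : ∀ x ∈ X, ∀ y ∈ X, lcp x y ∈ X := fun x hx y hy =>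
    hconn x hx y hy _ ⟨Or.inl (lcp_prefix_left x y), fun w h1 h2 => prefix_lcp w x y h1 h2⟩
  -- a minimal-length element
  obtain ⟨r₀, hr₀X, hr₀min⟩ : ∃ r ∈ X, ∀ y ∈ X, r.length ≤ y.length := by
    have h1 : (List.length '' X).Nonempty := hne.image _
    obtain ⟨r, hrX, hr⟩ := Nat.sInf_mem h1
    exact ⟨r, hrX, fun y hy => hr ▸ Nat.sInf_le ⟨y, hy, rfl⟩⟩
  -- minimal length elements are prefixes of everything
  have hprefix : ∀ r ∈ X, (∀ y ∈ X, r.length ≤ y.length) → ∀ z ∈ X, r <+: z := by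
    intro r hr hmin z hz
    have hcz := hc r hr z hz
    have h1 : lcp r z <+: r := lcp_prefix_left r z
    have h2 : lcp r z = r := h1.eq_of_length
      (le_antisymm h1.length_le (hmin _ hcz))
    rw [← h2]; exact lcp_prefix_right r z
  -- IsHead is equivalent to minimal length
  have hhead_min : ∀ r, IsHead n X r → ∀ y ∈ X, r.length ≤ y.length := by
    intro r hr y hy
    have h1 := hr.2 y hy
    have h2 := hlen y hy
    have h3 := hlen r hr.1
    simp only [hgt] at h1
    omega
  have hmin_head : ∀ r ∈ X, (∀ y ∈ X, r.length ≤ y.length) → IsHead n X r := by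
    intro r hr hmin
    exact ⟨hr, fun y hy => Nat.sub_le_sub_left (hmin y hy) n⟩
  constructor
  · refine ⟨r₀, hmin_head r₀ hr₀X hr₀min, ?_⟩
    intro r' hr'
    have h1 : r₀ <+: r' := hprefix r₀ hr₀X hr₀min r' hr'.1
    have h2 : r'.length ≤ r₀.length := hhead_min r' hr' r₀ hr₀X
    exact (h1.eq_of_length (le_antisymm h1.length_le h2)).symm
  · intro r hrhead
    have hrX : r ∈ X := hrhead.1
    have hrmin : ∀ y ∈ X, r.length ≤ y.length := hhead_min r hrhead
    have hrpre : ∀ z ∈ X, r <+: z := hprefix r hrX hrmin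
    -- the frontier: maximal elements of X
    set F : Set V := {z | z ∈ X ∧ ∀ w ∈ X, z <+: w → w = z} with hF
    have hFX : F ⊆ X := fun z hz => hz.1
    -- child towards an element of X is in X
    have childB : ∀ z ∈ X, ∀ (b : Bool) (t : List Bool), z ++ b :: t ∈ X → z ++ [b] ∈ X := by
      intro z hz b t hw
      have hrz : r <+: z := hrpre z hz
      exact hconn r hrX _ hw (z ++ [b])
        ⟨Or.inr ⟨t, by simp⟩,
         fun w h1 _ => h1.trans (hrz.trans (List.prefix_append z [b]))⟩
    -- sibling closure
    have sibling : ∀ z ∈ X, ∀ b : Bool, z ++ [b] ∈ X → z ++ [!b] ∈ X := by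
      intro z hz b hb
      have hln : z.length < n := by
        have := hlen _ hb; simp at this; omega
      cases b with
      | true => exact (hcl z hln).1 hz hb
      | false => exact (hcl z hln).2.1 hz hb
    -- proper extension decomposition
    have proper : ∀ z w : V, z <+: w → z ≠ w → ∃ b t, w = z ++ b :: t := by
      intro z w hzw hne'
      obtain ⟨s, rfl⟩ := hzw
      cases s with
      | nil => simp at hne'
      | cons b t => exact ⟨b, t, rfl⟩
    -- every element has a maximal element above it
    have maxabove : ∀ z ∈ X, ∃ f ∈ F, z <+: f := by
      intro z hz
      set s : Set ℕ := {k | ∃ w, w ∈ X ∧ z <+: w ∧ w.length = k} with hs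
      have hsne : s.Nonempty := ⟨z.length, z, hz, List.prefix_rfl, rfl⟩
      have hsbdd : BddAbove s := ⟨n, fun k ⟨w, hw, _, hwl⟩ => hwl ▸ hlen w hw⟩
      obtain ⟨w, hwX, hzw, hwl⟩ := Nat.sSup_mem hsne hsbdd
      refine ⟨w, ⟨hwX, ?_⟩, hzw⟩
      intro w' hw' hww'
      have h1 : w'.length ≤ w.length := hwl ▸ le_csSup hsbdd ⟨w', hw', hzw.trans hww', rfl⟩
      exact (hww'.eq_of_length (le_antisymm hww'.length_le h1)).symm
    -- F encloses r
    have hEnc : Encloses n F r := by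
      intro l hl hrl
      set s : Set ℕ := {k | ∃ z, z ∈ X ∧ z <+: l ∧ z.length = k} with hs
      have hsne : s.Nonempty := ⟨r.length, r, hrX, hrl, rfl⟩
      have hsbdd : BddAbove s := ⟨n, fun k ⟨w, hw, _, hwl⟩ => hwl ▸ hlen w hw⟩
      obtain ⟨z, hzX, hzl, hzlen⟩ := Nat.sSup_mem hsne hsbdd
      refine ⟨z, ⟨hzX, ?_⟩, hrpre z hzX, hzl⟩
      intro w hw hzw
      by_contra hne'
      obtain ⟨b, t, rfl⟩ := proper z w hzw (fun h => hne' h.symm)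
      have hzb : z ++ [b] ∈ X := childB z hzX b t hw
      have hznb : z ++ [!b] ∈ X := sibling z hzX b hzb
      have hzln : z.length < n := by have := hlen _ hw; simp at this; omega
      have hzl' : z ≠ l := fun h => by rw [h] at hzln; omega
      obtain ⟨c, t', hlt⟩ := proper z l hzl hzl'
      have hzc : z ++ [c] ∈ X := by
        cases b with
        | true => cases c with
          | true => exact hzb
          | false => simpa using hznb
        | false => cases c with
          | true => simpa using hznb
          | false => exact hzb
      have h1 : (z ++ [c]).length ≤ z.length :=
        hzlen ▸ le_csSup hsbdd ⟨z ++ [c], hzc, ⟨t', by rw [hlt]; simp⟩, rfl⟩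
      simp at h1
    -- description of X
    have hXdesc : X = {z : V | ∃ f ∈ F, r <+: z ∧ z <+: f} := by
      ext z
      constructor
      · intro hz
        obtain ⟨f, hfF, hzf⟩ := maxabove z hz
        exact ⟨f, hfF, hrpre z hz, hzf⟩
      · rintro ⟨f, hfF, hrz, hzf⟩
        exact hconn r hrX f (hFX hfF) z
          ⟨Or.inr hzf, fun w h1 _ => h1.trans hrz⟩
    refine ⟨F, hFX, ⟨hEnc, ?_⟩, hXdesc, ?_⟩
    · -- minimality
      intro F' hss hEnc'
      obtain ⟨f, hfF, hfF'⟩ := Set.exists_of_ssubset hss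
      have hfX : f ∈ X := hFX hfF
      set l : V := f ++ List.replicate (n - f.length) true with hldef
      have hll : l.length = n := by
        have := hlen f hfX; simp [hldef]; omega
      have hfl : f <+: l := List.prefix_append _ _
      obtain ⟨z, hzF', hrz, hzl⟩ := hEnc' l hll ((hrpre f hfX).trans hfl)
      have hzF : z ∈ F := hss.1 hzF'
      rcases List.prefix_or_prefix_of_prefix hzl hfl with h | h
      · have h2 : f = z := hzF.2 f hfX h
        exact hfF' (h2 ▸ hzF')
      · have h2 : z = f := hfF.2 z (hFX hzF) h
        exact hfF' (h2 ▸ hzF')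
    · -- closure
      apply le_antisymm
      · exact Set.sInter_subset_of_mem ⟨hFX, hX, hcl⟩
      · intro z hz
        rw [cl, Set.mem_sInter]
        rintro Y ⟨hYF, hYtree, hYcl⟩
        suffices h : ∀ k, ∀ z ∈ X, n - z.length ≤ k → z ∈ Y from
          h (n - z.length) z hz le_rfl
        intro k
        induction k with
        | zero =>
          intro z hz hk
          have hz1 := hlen z hz
          have hzn : z.length = n := by omega
          refine hYF ⟨hz, fun w hw hzw => ?_⟩
          exact (hzw.eq_of_length (le_antisymm hzw.length_le (hzn ▸ hlen w hw))).symm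
        | succ k ih =>
          intro z hz hk
          by_cases hzF : ∀ w ∈ X, z <+: w → w = z
          · exact hYF ⟨hz, hzF⟩
          · push_neg at hzF
            obtain ⟨w, hw, hzw, hwz⟩ := hzF
            obtain ⟨b, t, rfl⟩ := proper z w hzw (fun h => hwz h.symm)
            have hzb : z ++ [b] ∈ X := childB z hz b t hw
            have hznb : z ++ [!b] ∈ X := sibling z hz b hzb
            have hzt : z ++ [true] ∈ X := by
              cases b with
              | true => exact hzb
              | false => simpa using hznb
            have hzf : z ++ [false] ∈ X := by
              cases b with
              | true => simpa using hznb
              | false => exact hzb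
            have hzln : z.length < n := by have := hlen _ hw; simp at this; omega
            have h1 : z ++ [true] ∈ Y := ih _ hzt (by simp; omega)
            have h2 : z ++ [false] ∈ Y := ih _ hzf (by simp; omega)
            exact (hYcl z hzln).2.2 h1 h2
end

section
/- Let T = (V,E) be a finite complete rooted binary tree and let X ⊆ V be a nonempty closed connected set with head r and frontier F. Then |F| > hgt(r) − min-h(X), i.e. the size of the frontier strictly exceeds the difference between the height of the head of X and the minimum height of an element of X. -/
/-- Key counting lemma: a prefix-free family of extensions of `r` that encloses `r`
must have at least `f₀.length - r.length + 1` elements, for any `f₀ ∈ F`. -/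
lemma key_card (n : ℕ) (F : Set V) (r f₀ : V) (hfin : F.Finite) (hf₀ : f₀ ∈ F)
    (hrf : ∀ f ∈ F, r <+: f) (hlen : ∀ f ∈ F, f.length ≤ n)
    (hanti : ∀ f ∈ F, ∀ g ∈ F, f <+: g → f = g)
    (henc : Encloses n F r) :
    f₀.length - r.length + 1 ≤ F.ncard := by
  classical
  have hrf₀ : r <+: f₀ := hrf f₀ hf₀
  have hlf₀ : f₀.length ≤ n := hlen f₀ hf₀
  -- for each level i between |r| and |f₀|, find a witness branching off f₀'s path
  have hwit : ∀ i, r.length ≤ i → i < f₀.length →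
      ∃ w, w ∈ F ∧ w[i]? = some (!f₀.getD i true) ∧ ∀ k < i, w[k]? = f₀[k]? := by
    intro i hri hif
    set b : Bool := !f₀.getD i true with hb
    set l : V := f₀.take i ++ b :: List.replicate (n - (i+1)) true with hl
    have htklen : (f₀.take i).length = i := by
      simp [List.length_take]; omega
    have hllen : l.length = n := by
      simp [hl, htklen]; omega
    have hrl : r <+: l := by
      obtain ⟨t, ht⟩ := hrf₀
      have : f₀.take i = r ++ t.take (i - r.length) := by
        rw [← ht, List.take_append, List.take_of_length_le hri]
      exact ((this ▸ (List.prefix_append r _)).trans (List.prefix_append _ _))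
    obtain ⟨z, hzF, hrz, hzl⟩ := henc l hllen hrl
    -- z must be longer than i
    have hiz : i < z.length := by
      by_contra h
      push_neg at h
      have h1 : z <+: f₀.take i := by
        have hzt : z <+: l.take i := List.prefix_take_iff.mpr ⟨hzl, h⟩
        rw [hl, List.take_append, htklen, Nat.sub_self, List.take_zero,
          List.append_nil, List.take_take, min_self] at hzt
        exact hzt
      have h2 := hanti z hzF f₀ hf₀ (h1.trans (List.take_prefix _ _))
      rw [h2] at h
      omega
    have hztk : z.take (i+1) = f₀.take i ++ [b] := by
      have h1 : l.take (i+1) = z.take (i+1) := by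
        obtain ⟨t, ht⟩ := hzl
        rw [← ht, List.take_append,
          show i + 1 - z.length = 0 from by omega, List.take_zero, List.append_nil]
      have h2 : (i+1) - (f₀.take i).length = 1 := by omega
      rw [← h1, hl, List.take_append, h2,
        List.take_of_length_le (by omega : (f₀.take i).length ≤ i + 1)]
      simp
    refine ⟨z, hzF, ?_, ?_⟩
    · have h3 := List.getElem?_concat_length (l := f₀.take i) (a := b)
      rw [htklen] at h3
      have h4 : (z.take (i+1))[i]? = some b := by rw [hztk, h3]
      rwa [List.getElem?_take, if_pos (by omega)] at h4
    · intro k hk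
      have : (z.take (i+1))[k]? = (f₀.take i ++ [b])[k]? := by rw [hztk]
      rwa [List.getElem?_take, if_pos (by omega),
        List.getElem?_append_left (by omega),
        List.getElem?_take, if_pos hk] at this
  choose w hwF hwget hwpre using hwit
  -- set up the finset counting
  have hFt : Fintype F := hfin.fintype
  set s : Finset ℕ := Finset.Ico r.length f₀.length with hs
  set F' : Finset V := hfin.toFinset with hF'
  have hf₀' : f₀ ∈ F' := hfin.mem_toFinset.mpr hf₀
  have hgetD : ∀ i (h1 : r.length ≤ i) (h2 : i < f₀.length),
      f₀[i]? = some (f₀.getD i true) := by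
    intro i h1 h2
    rw [List.getD_eq_getElem _ _ h2, List.getElem?_eq_getElem h2]
  have hmap : ∀ i ∈ s, (fun i => if h : r.length ≤ i ∧ i < f₀.length then w i h.1 h.2 else []) i
      ∈ F'.erase f₀ := by
    intro i hi
    rw [hs, Finset.mem_Ico] at hi
    simp only [dif_pos hi]
    refine Finset.mem_erase.mpr ⟨?_, hfin.mem_toFinset.mpr (hwF i hi.1 hi.2)⟩
    intro hcon
    have h1 := hwget i hi.1 hi.2
    rw [hcon, hgetD i hi.1 hi.2] at h1
    simp at h1
  have hinj : Set.InjOn (fun i => if h : r.length ≤ i ∧ i < f₀.length then w i h.1 h.2 else [])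
      ↑s := by
    intro i hi j hj hij
    rw [hs, Finset.coe_Ico, Set.mem_Ico] at hi hj
    simp only [dif_pos (And.intro hi.1 hi.2), dif_pos (And.intro hj.1 hj.2)] at hij
    by_contra hne
    rcases Nat.lt_or_ge i j with h | h
    · have h1 := hwget i hi.1 hi.2
      have h2 := hwpre j hj.1 hj.2 i h
      rw [← hij, h1, hgetD i hi.1 hi.2] at h2
      simp at h2
    · have h' : j < i := by omega
      have h1 := hwget j hj.1 hj.2
      have h2 := hwpre i hi.1 hi.2 j h'
      rw [hij, h1, hgetD j hj.1 hj.2] at h2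
      simp at h2
  have hcard := Finset.card_le_card_of_injOn _ hmap hinj
  rw [Finset.card_erase_of_mem hf₀'] at hcard
  have hscard : s.card = f₀.length - r.length := by simp [hs]
  have hF'card : 1 ≤ F'.card := Finset.card_pos.mpr ⟨f₀, hf₀'⟩
  have : F.ncard = F'.card := by
    rw [hF', Set.ncard_eq_toFinset_card']
    congr 1
    ext x
    simp
  omega

/-- for a nonempty closed connected set `X` with head `r` and
frontier `F`, the size of `F` strictly exceeds `hgt(r) - min-h(X)`. -/
theorem stmt_2 (n : ℕ) (X F : Set V) (r : V) (hX : X ⊆ treeSet n) (hne : X.Nonempty)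
    (hcl : TripleClosed n X) (hconn : Conn X)
    (hr : IsHead n X r) (hF : IsFrontier n X F r) :
    F.ncard > hgt n r - minh n X := by
  classical
  obtain ⟨hFX, ⟨henc, hmin⟩, hXeq⟩ := hF
  -- every element of F extends r
  have hrf : ∀ f ∈ F, r <+: f := by
    intro f hf
    have : f ∈ X := hFX hf
    rw [hXeq] at this
    obtain ⟨g, _, h1, _⟩ := this
    exact h1
  have hlen : ∀ f ∈ F, f.length ≤ n := fun f hf => hX (hFX hf)
  -- F is an antichain under prefix order
  have hanti : ∀ f ∈ F, ∀ g ∈ F, f <+: g → f = g := by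
    intro f hf g hg hfg
    by_contra hne'
    apply hmin (F \ {g}) (Set.sdiff_singleton_ssubset.mpr hg)
    intro l hl hrl
    obtain ⟨z, hzF, hrz, hzl⟩ := henc l hl hrl
    by_cases hzg : z = g
    · exact ⟨f, ⟨hf, fun h => hne' h⟩, hrf f hf, hfg.trans (hzg ▸ hzl)⟩
    · exact ⟨z, ⟨hzF, hzg⟩, hrz, hzl⟩
  -- element of X of minimal height
  have hmne : (hgt n '' X).Nonempty := hne.image _
  obtain ⟨m, hmX, hm⟩ := Nat.sInf_mem hmne
  have hmlen : m.length ≤ n := hX hmX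
  -- find f₀ ∈ F longer than m
  have hmX' := hmX
  rw [hXeq] at hmX'
  obtain ⟨f₀, hf₀F, _, hmf₀⟩ := hmX'
  have hmf₀len : m.length ≤ f₀.length := hmf₀.length_le
  have hfin : F.Finite := (List.finite_length_le Bool n).subset (fun f hf => hlen f hf)
  have hkey := key_card n F r f₀ hfin hf₀F hrf hlen hanti henc
  have hminh : minh n X = n - m.length := by rw [minh, ← hm, hgt]
  rw [hminh, hgt]
  omega
end

section
/- Let T = (V,E) be a finite complete rooted binary tree, p a prime, X ⊆ V a closed set, and ρ : X → Z/pZ. Then ρ is consistent (i.e. ρ(x) = ρ(y) + ρ(z) whenever x,y,z ∈ X and y,z are the two children of x) if and only if for every x ∈ X and every F ⊆ X such that F minimally encloses x, one has ρ(x) = Σ_{y ∈ F} ρ(y) (sum in Z/pZ). -/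
/-- `ρ` is consistent on a closed set `X`: `ρ(x) = ρ(y) + ρ(z)` whenever
`x, y, z ∈ X` and `y, z` are the two children of `x`. -/
def ConsistentOn (p : ℕ) (X : Set V) (ρ : V → ZMod p) : Prop :=
  ∀ x : V, x ∈ X → x ++ [true] ∈ X → x ++ [false] ∈ X →
    ρ x = ρ (x ++ [true]) + ρ (x ++ [false])

/-- `ρ` (viewed as a function with domain `X`) is consistent: it has a
consistent extension to the closure of `X`. -/
def Consistent (n p : ℕ) (X : Set V) (ρ : V → ZMod p) : Prop :=
  ∃ ρ' : V → ZMod p, ConsistentOn p (cl n X) ρ' ∧ ∀ x ∈ X, ρ' x = ρ x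


/-- Two distinct one-step extensions of `v` cannot both be prefixes of `l`. -/
lemma incompat {v l : V} {b : Bool} (h1 : v ++ [b] <+: l) (h2 : v ++ [!b] <+: l) : False := by
  have hlen : (v ++ [b]).length ≤ (v ++ [!b]).length := by simp
  have h := List.prefix_of_prefix_length_le h1 h2 hlen
  have heq : v ++ [b] = v ++ [!b] := h.eq_of_length (by simp)
  have : b = !b := by simpa using heq
  simp at this

lemma mem_prefix {n : ℕ} {F : Set V} {v : V} (hF : MinEncloses n F v) :
    ∀ f ∈ F, v <+: f := by
  by_contra h
  push_neg at h
  obtain ⟨f, hfF, hfv⟩ := h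
  have hsub : {g ∈ F | v <+: g} ⊂ F := ⟨fun g hg => hg.1, fun hs => hfv (hs hfF).2⟩
  exact hF.2 _ hsub (fun l hl hvl => by
    obtain ⟨z, hzF, hvz, hzl⟩ := hF.1 l hl hvl
    exact ⟨z, ⟨hzF, hvz⟩, hvz, hzl⟩)

lemma enclose_child {n : ℕ} {F : Set V} {v : V} (hF : MinEncloses n F v) (hv : v ∉ F)
    (b : Bool) : Encloses n {f ∈ F | v ++ [b] <+: f} (v ++ [b]) := by
  intro l hl hpl
  have hvl : v <+: l := (List.prefix_append v [b]).trans hpl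
  obtain ⟨z, hzF, hvz, hzl⟩ := hF.1 l hl hvl
  have hzne : z ≠ v := fun h => hv (h ▸ hzF)
  obtain ⟨t, rfl⟩ := hvz
  have htne : t ≠ [] := by rintro rfl; simp at hzne
  obtain ⟨c, t', rfl⟩ := List.exists_cons_of_ne_nil htne
  have hcz : v ++ [c] <+: v ++ c :: t' := by
    refine ⟨t', by simp⟩
  have hcl : v ++ [c] <+: l := hcz.trans hzl
  have hcb : c = b := by
    by_contra hcb
    have : c = !b := by cases b <;> cases c <;> simp_all
    exact incompat hpl (this ▸ hcl)
  subst hcb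
  exact ⟨v ++ c :: t', ⟨hzF, hcz⟩, hcz, hzl⟩

lemma split_child {n : ℕ} {F : Set V} {v : V} (hF : MinEncloses n F v) (hv : v ∉ F)
    (hvn : v.length < n) (b : Bool) :
    MinEncloses n {f ∈ F | v ++ [b] <+: f} (v ++ [b]) := by
  refine ⟨enclose_child hF hv b, ?_⟩
  intro G hG hGenc
  obtain ⟨f0, hf0F, hf0G⟩ : ∃ f0 ∈ {f ∈ F | v ++ [b] <+: f}, f0 ∉ G := by
    obtain ⟨hsub, hne⟩ := hG
    by_contra h; push_neg at h
    exact hne (fun x hx => h x hx)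
  refine hF.2 (G ∪ {f ∈ F | v ++ [!b] <+: f}) ?_ ?_
  · constructor
    · rintro f (hf | hf)
      · exact (hG.1 hf).1
      · exact hf.1
    · intro hsub
      rcases hsub hf0F.1 with hf | hf
      · exact hf0G hf
      · exact incompat hf0F.2 hf.2
  · intro l hl hvl
    obtain ⟨t, rfl⟩ := hvl
    have htne : t ≠ [] := by
      rintro rfl; simp at hl; omega
    obtain ⟨c, t', rfl⟩ := List.exists_cons_of_ne_nil htne
    have hcl : v ++ [c] <+: v ++ c :: t' := ⟨t', by simp⟩
    rcases eq_or_ne c b with rfl | hcb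
    · obtain ⟨z, hzG, hbz, hzl⟩ := hGenc _ hl hcl
      exact ⟨z, Or.inl hzG, (List.prefix_append v [c]).trans hbz, hzl⟩
    · have hc : c = !b := by cases b <;> cases c <;> simp_all
      subst hc
      obtain ⟨z, hzF, hbz, hzl⟩ := enclose_child hF hv (!b) _ hl hcl
      exact ⟨z, Or.inr hzF, (List.prefix_append v [!b]).trans hbz, hzl⟩

lemma key_lemma (n p : ℕ) (X : Set V) (hX : X ⊆ treeSet n) (hXcl : TripleClosed n X)
    (ρ : V → ZMod p) (hρ : ConsistentOn p X ρ) :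
    ∀ k : ℕ, ∀ v : V, n - v.length ≤ k → v.length ≤ n → ∀ F : Set V, F ⊆ X →
      MinEncloses n F v → v ∈ X ∧ ρ v = ∑ᶠ y ∈ F, ρ y := by
  intro k
  induction k with
  | zero =>
    intro v hk hvn F hFX hF
    -- v.length = n, so v ∈ F and F = {v}
    have hvlen : v.length = n := by omega
    have hvF : v ∈ F := by
      obtain ⟨z, hzF, hvz, hzv⟩ := hF.1 v hvlen (List.prefix_refl v)
      have : z = v := hzv.eq_of_length (le_antisymm hzv.length_le hvz.length_le)
      exact this ▸ hzF
    have hFeq : F = {v} := by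
      by_contra hne
      have hsub : ({v} : Set V) ⊂ F := ⟨by simpa using hvF, fun h => hne (le_antisymm h (by simpa using hvF))⟩
      exact hF.2 _ hsub (fun l hl hvl => ⟨v, rfl, List.prefix_refl v, hvl⟩)
    subst hFeq
    exact ⟨hFX hvF, (finsum_mem_singleton).symm⟩
  | succ k ih =>
    intro v hk hvn F hFX hF
    by_cases hvF : v ∈ F
    · have hFeq : F = {v} := by
        by_contra hne
        have hsub : ({v} : Set V) ⊂ F := ⟨by simpa using hvF, fun h => hne (le_antisymm h (by simpa using hvF))⟩
        exact hF.2 _ hsub (fun l hl hvl => ⟨v, rfl, List.prefix_refl v, hvl⟩)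
      subst hFeq
      exact ⟨hFX hvF, (finsum_mem_singleton).symm⟩
    · -- v ∉ F; first show v.length < n
      have hvlt : v.length < n := by
        rcases lt_or_eq_of_le hvn with h | h
        · exact h
        · exfalso
          obtain ⟨z, hzF, hvz, hzv⟩ := hF.1 v h (List.prefix_refl v)
          have : z = v := hzv.eq_of_length (le_antisymm hzv.length_le hvz.length_le)
          exact hvF (this ▸ hzF)
      set FT := {f ∈ F | v ++ [true] <+: f} with hFT
      set FF := {f ∈ F | v ++ [false] <+: f} with hFF
      have hT := split_child hF hvF hvlt true
      have hFb := split_child hF hvF hvlt false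
      have hTF : ¬(false = true) := by simp
      have hbt : (!true) = false := rfl
      have hlen1 : (v ++ [true]).length ≤ n := by simp; omega
      have hlen2 : (v ++ [false]).length ≤ n := by simp; omega
      have hk1 : n - (v ++ [true]).length ≤ k := by simp; omega
      have hk2 : n - (v ++ [false]).length ≤ k := by simp; omega
      obtain ⟨hmemT, hsumT⟩ := ih (v ++ [true]) hk1 hlen1 FT (fun f hf => hFX hf.1) hT
      obtain ⟨hmemF, hsumF⟩ := ih (v ++ [false]) hk2 hlen2 FF (fun f hf => hFX hf.1) hFb
      have hvX : v ∈ X := (hXcl v hvlt).2.2 hmemT hmemF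
      have hunion : F = FT ∪ FF := by
        ext f
        constructor
        · intro hfF
          have hvf : v <+: f := mem_prefix hF f hfF
          obtain ⟨t, rfl⟩ := hvf
          have htne : t ≠ [] := by rintro rfl; exact hvF (by simpa using hfF)
          obtain ⟨c, t', rfl⟩ := List.exists_cons_of_ne_nil htne
          have hcf : v ++ [c] <+: v ++ c :: t' := ⟨t', by simp⟩
          cases c
          · exact Or.inr ⟨hfF, hcf⟩
          · exact Or.inl ⟨hfF, hcf⟩
        · rintro (hf | hf) <;> exact hf.1
      have hdisj : Disjoint FT FF := by
        rw [Set.disjoint_left]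
        rintro f ⟨_, hfT⟩ ⟨_, hfF2⟩
        exact incompat (b := true) hfT hfF2
      have hfinT : FT.Finite := ((List.finite_length_le Bool n).subset (fun f hf => hX (hFX hf.1))).subset (fun f hf => hf)
      have hfinF : FF.Finite := ((List.finite_length_le Bool n).subset (fun f hf => hX (hFX hf.1))).subset (fun f hf => hf)
      refine ⟨hvX, ?_⟩
      rw [hunion, finsum_mem_union hdisj (hfinT.subset (fun f hf => hf)) (hfinF.subset (fun f hf => hf)),
        ← hsumT, ← hsumF]
      exact hρ v hvX hmemT hmemF

/-- on a closed set `X`, `ρ` is consistent if and only if for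
every `x ∈ X` and every `F ⊆ X` minimally enclosing `x`,
`ρ(x) = Σ_{y ∈ F} ρ(y)`. -/
theorem stmt_3 (n p : ℕ) (hp : p.Prime) (X : Set V) (hX : X ⊆ treeSet n)
    (hXcl : TripleClosed n X) (ρ : V → ZMod p) :
    ConsistentOn p X ρ ↔
      ∀ x ∈ X, ∀ F : Set V, F ⊆ X → MinEncloses n F x → ρ x = ∑ᶠ y ∈ F, ρ y := by
  constructor
  · intro hρ x hx F hFX hF
    exact (key_lemma n p X hX hXcl ρ hρ (n - x.length) x le_rfl (hX hx) F hFX hF).2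
  · intro h x hx hxT hxF
    have hxlt : x.length < n := by
      have := hX hxT
      simp only [treeSet, Set.mem_setOf_eq, List.length_append, List.length_cons] at this
      omega
    set F : Set V := {x ++ [true], x ++ [false]} with hFdef
    have hne : x ++ [true] ≠ x ++ [false] := by simp
    have hFX : F ⊆ X := by
      rintro f (rfl | rfl)
      · exact hxT
      · exact hxF
    have hleaf : ∀ b : Bool, ∃ l : V, l.length = n ∧ x ++ [b] <+: l := by
      intro b
      refine ⟨x ++ [b] ++ List.replicate (n - x.length - 1) b, by simp; omega, List.prefix_append _ _⟩
    have hF : MinEncloses n F x := by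
      constructor
      · intro l hl hxl
        obtain ⟨t, rfl⟩ := hxl
        have htne : t ≠ [] := by rintro rfl; simp at hl; omega
        obtain ⟨c, t', rfl⟩ := List.exists_cons_of_ne_nil htne
        have hcf : x ++ [c] <+: x ++ c :: t' := ⟨t', by simp⟩
        refine ⟨x ++ [c], ?_, List.prefix_append _ _, hcf⟩
        cases c
        · exact Or.inr rfl
        · exact Or.inl rfl
      · intro F' hF' hF'enc
        obtain ⟨f0, hf0F, hf0F'⟩ : ∃ f0 ∈ F, f0 ∉ F' := by
          by_contra hc; push_neg at hc
          exact hF'.2 (fun f hf => hc f hf)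
        have hbex : ∃ b : Bool, f0 = x ++ [b] := by
          rcases hf0F with rfl | rfl
          · exact ⟨true, rfl⟩
          · exact ⟨false, rfl⟩
        obtain ⟨b, rfl⟩ := hbex
        obtain ⟨l, hl, hbl⟩ := hleaf b
        obtain ⟨z, hzF', hxz, hzl⟩ := hF'enc l hl ((List.prefix_append x [b]).trans hbl)
        have hzF : z ∈ F := hF'.1 hzF'
        have hzb : ∃ c : Bool, z = x ++ [c] := by
          rcases hzF with rfl | rfl
          · exact ⟨true, rfl⟩
          · exact ⟨false, rfl⟩
        obtain ⟨c, rfl⟩ := hzb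
        rcases eq_or_ne c b with rfl | hcb
        · exact hf0F' hzF'
        · have hc : c = !b := by cases b <;> cases c <;> simp_all
          subst hc
          exact incompat hbl hzl
    have := h x hx F hFX hF
    rwa [hFdef, finsum_mem_pair hne] at this
end

section
/- Let T = (V,E) be a finite complete rooted binary tree, p a prime, X ⊆ V an arbitrary set, and ρ : X → Z/pZ. Then ρ is consistent (i.e. there exists a consistent function ρ' : cl(X) → Z/pZ extending ρ) if and only if for every x ∈ X and every F ⊆ X such that F minimally encloses x, one has ρ(x) = Σ_{y ∈ F} ρ(y) (sum in Z/pZ). -/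
/-! ### Auxiliary lemmas -/

lemma treeSet_finite (n : ℕ) : (treeSet n).Finite := List.finite_length_le Bool n

lemma eq_of_prefix_prefix_length {p q l : V} (hp : p <+: l) (hq : q <+: l)
    (h : p.length = q.length) : p = q :=
  (List.prefix_of_prefix_length_le hp hq h.le).eq_of_length h

lemma exists_leaf (n : ℕ) {v : V} (hv : v.length ≤ n) :
    ∃ l : V, l.length = n ∧ v <+: l := by
  refine ⟨v ++ List.replicate (n - v.length) true, ?_, List.prefix_append _ _⟩
  simp [List.length_append, List.length_replicate]; omega

lemma exists_child_prefix {v f : V} (h : v <+: f) (hne : f ≠ v) :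
    ∃ b : Bool, v ++ [b] <+: f := by
  obtain ⟨r, rfl⟩ := h
  cases r with
  | nil => simp at hne
  | cons b r' => exact ⟨b, ⟨r', by simp⟩⟩

/-- Elements of a minimally enclosing set are descendants of `v` in the tree. -/
lemma MinEncloses.desc {n : ℕ} {F : Set V} {v : V} (h : MinEncloses n F v)
    {f : V} (hf : f ∈ F) : v <+: f ∧ f.length ≤ n := by
  by_contra hcon
  refine h.2 (F \ {f}) ⟨Set.diff_subset, fun hsub => by simpa using hsub hf⟩ ?_
  intro l hl hvl
  obtain ⟨z, hz, hvz, hzl⟩ := h.1 l hl hvl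
  refine ⟨z, ⟨hz, ?_⟩, hvz, hzl⟩
  rintro rfl
  exact hcon ⟨hvz, hl ▸ hzl.length_le⟩

lemma MinEncloses.eq_singleton_of_mem {n : ℕ} {F : Set V} {v : V}
    (h : MinEncloses n F v) (hv : v ∈ F) : F = {v} := by
  ext f
  simp only [Set.mem_singleton_iff]
  constructor
  · intro hf
    by_contra hne
    refine h.2 (F \ {f}) ⟨Set.diff_subset, fun hsub => by simpa using hsub hf⟩ ?_
    intro l hl hvl
    exact ⟨v, ⟨hv, fun h' => hne (Set.eq_of_mem_singleton h').symm⟩, List.prefix_refl v, hvl⟩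
  · rintro rfl; exact hv

lemma minEncloses_singleton {n : ℕ} {v : V} (hv : v.length ≤ n) :
    MinEncloses n {v} v := by
  constructor
  · intro l hl hvl
    exact ⟨v, rfl, List.prefix_refl v, hvl⟩
  · intro F' hF' hEnc
    have hF'e : F' = ∅ := Set.ssubset_singleton_iff.mp hF'
    obtain ⟨l, hl, hvl⟩ := exists_leaf n hv
    obtain ⟨z, hz, -⟩ := hEnc l hl hvl
    rw [hF'e] at hz
    exact hz
/-- If `v ∉ F` and `F` minimally encloses `v`, then `v` is not a leaf. -/
lemma MinEncloses.length_lt {n : ℕ} {F : Set V} {v : V} (h : MinEncloses n F v)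
    (hv : v.length ≤ n) (hvF : v ∉ F) : v.length < n := by
  rcases lt_or_eq_of_le hv with h' | h'
  · exact h'
  · exfalso
    obtain ⟨z, hz, hvz, hzv⟩ := h.1 v h' (List.prefix_refl v)
    have : z = v := hzv.eq_of_length (le_antisymm hzv.length_le hvz.length_le)
    exact hvF (this ▸ hz)

/-- Splitting a minimally enclosing set at the two children. -/
lemma MinEncloses.split {n : ℕ} {F : Set V} {v : V} (h : MinEncloses n F v)
    (hv : v.length ≤ n) (hvF : v ∉ F) :
    v.length < n ∧
    F = {f ∈ F | v ++ [true] <+: f} ∪ {f ∈ F | v ++ [false] <+: f} ∧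
    Disjoint {f ∈ F | v ++ [true] <+: f} {f ∈ F | v ++ [false] <+: f} ∧
    MinEncloses n {f ∈ F | v ++ [true] <+: f} (v ++ [true]) ∧
    MinEncloses n {f ∈ F | v ++ [false] <+: f} (v ++ [false]) := by
  have hlt : v.length < n := h.length_lt hv hvF
  set Ft := {f ∈ F | v ++ [true] <+: f} with hFt
  set Ff := {f ∈ F | v ++ [false] <+: f} with hFf
  -- disjointness
  have hdisj : Disjoint Ft Ff := by
    rw [Set.disjoint_left]
    rintro f ⟨-, hft⟩ ⟨-, hff⟩
    have := eq_of_prefix_prefix_length hft hff (by simp)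
    simpa using this
  -- union
  have hunion : F = Ft ∪ Ff := by
    ext f
    constructor
    · intro hf
      obtain ⟨hvf, -⟩ := h.desc hf
      obtain ⟨b, hb⟩ := exists_child_prefix hvf (fun h' => hvF (h' ▸ hf))
      cases b
      · exact Or.inr ⟨hf, hb⟩
      · exact Or.inl ⟨hf, hb⟩
    · rintro (⟨hf, -⟩ | ⟨hf, -⟩) <;> exact hf
  -- each part encloses the corresponding child
  have hencl : ∀ b : Bool, Encloses n {f ∈ F | v ++ [b] <+: f} (v ++ [b]) := by
    intro b l hl hvl
    obtain ⟨z, hz, hvz, hzl⟩ := h.1 l hl ((List.prefix_append v [b]).trans hvl)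
    have hzb : v ++ [b] <+: z := by
      obtain ⟨b', hb'⟩ := exists_child_prefix hvz (fun h' => hvF (h' ▸ hz))
      have : v ++ [b'] = v ++ [b] :=
        eq_of_prefix_prefix_length (hb'.trans hzl) hvl (by simp)
      simpa [this] using hb'
    exact ⟨z, ⟨hz, hzb⟩, hzb, hzl⟩
  -- minimality
  have hmin : ∀ b : Bool, MinEncloses n {f ∈ F | v ++ [b] <+: f} (v ++ [b]) := by
    intro b
    refine ⟨hencl b, fun F' hF' hEnc' => ?_⟩
    obtain ⟨g, hgF, hgF'⟩ := Set.exists_of_ssubset hF'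
    refine h.2 (F' ∪ {f ∈ F | v ++ [!b] <+: f}) ⟨?_, fun hsub => ?_⟩ ?_
    · rintro f (hf | hf)
      · exact (hF'.1 hf).1
      · exact hf.1
    · rcases hsub hgF.1 with hg | hg
      · exact hgF' hg
      · have := eq_of_prefix_prefix_length hgF.2 hg.2 (by simp)
        simp at this
    · intro l hl hvl
      have hllen : v.length < l.length := hl ▸ hlt
      obtain ⟨b', hb'⟩ := exists_child_prefix hvl
        (fun h' => by rw [h'] at hllen; omega)
      by_cases hbb : b' = b
      · subst hbb
        obtain ⟨z, hz, hvz, hzl⟩ := hEnc' l hl hb'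
        exact ⟨z, Or.inl hz, (List.prefix_append v [b']).trans hvz, hzl⟩
      · have hbb' : b' = !b := by cases b <;> cases b' <;> revert hbb <;> decide
        subst hbb'
        obtain ⟨z, hz, hvz, hzl⟩ := hencl (!b) l hl hb'
        exact ⟨z, Or.inr hz, (List.prefix_append v [!b]).trans hvz, hzl⟩
  exact ⟨hlt, hunion, hdisj, hmin true, hmin false⟩
/-- Gluing minimally enclosing sets of the two children. -/
lemma MinEncloses.glue {n : ℕ} {Gt Gf : Set V} {v : V} (hlen : v.length < n)
    (ht : MinEncloses n Gt (v ++ [true])) (hf : MinEncloses n Gf (v ++ [false])) :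
    MinEncloses n (Gt ∪ Gf) v := by
  have hdescT : ∀ g ∈ Gt, v ++ [true] <+: g := fun g hg => (ht.desc hg).1
  have hdescF : ∀ g ∈ Gf, v ++ [false] <+: g := fun g hg => (hf.desc hg).1
  have henc : Encloses n (Gt ∪ Gf) v := by
    intro l hl hvl
    have hllen : v.length < l.length := hl ▸ hlen
    obtain ⟨b, hb⟩ := exists_child_prefix hvl (fun h' => by rw [h'] at hllen; omega)
    cases b
    · obtain ⟨z, hz, hvz, hzl⟩ := hf.1 l hl hb
      exact ⟨z, Or.inr hz, (List.prefix_append v [false]).trans hvz, hzl⟩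
    · obtain ⟨z, hz, hvz, hzl⟩ := ht.1 l hl hb
      exact ⟨z, Or.inl hz, (List.prefix_append v [true]).trans hvz, hzl⟩
  refine ⟨henc, fun F' hF' hEnc' => ?_⟩
  obtain ⟨g, hgG, hgF'⟩ := Set.exists_of_ssubset hF'
  have keyT : Encloses n (F' ∩ Gt) (v ++ [true]) := by
    intro l hl hbl
    obtain ⟨z, hz, hvz, hzl⟩ := hEnc' l hl ((List.prefix_append v [true]).trans hbl)
    have hzT : z ∈ Gt := by
      rcases hF'.1 hz with hz' | hz'
      · exact hz'
      · exfalso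
        have := eq_of_prefix_prefix_length ((hdescF z hz').trans hzl) hbl (by simp)
        simp at this
    exact ⟨z, ⟨hz, hzT⟩, hdescT z hzT, hzl⟩
  have keyF : Encloses n (F' ∩ Gf) (v ++ [false]) := by
    intro l hl hbl
    obtain ⟨z, hz, hvz, hzl⟩ := hEnc' l hl ((List.prefix_append v [false]).trans hbl)
    have hzF : z ∈ Gf := by
      rcases hF'.1 hz with hz' | hz'
      · exfalso
        have := eq_of_prefix_prefix_length ((hdescT z hz').trans hzl) hbl (by simp)
        simp at this
      · exact hz'
    exact ⟨z, ⟨hz, hzF⟩, hdescF z hzF, hzl⟩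
  rcases hgG with hgT | hgT
  · exact ht.2 (F' ∩ Gt) ⟨Set.inter_subset_right, fun hsub =>
      hgF' ((hsub hgT).1)⟩ keyT
  · exact hf.2 (F' ∩ Gf) ⟨Set.inter_subset_right, fun hsub =>
      hgF' ((hsub hgT).1)⟩ keyF

/-- Lifting a minimally enclosing set from a subtree. -/
lemma MinEncloses.lift {n : ℕ} {F : Set V} {s : V} (b : Bool)
    (h : MinEncloses n F s) : MinEncloses (n + 1) ((b :: ·) '' F) (b :: s) := by
  constructor
  · rintro l hl hbl
    cases l with
    | nil => simp at hl
    | cons b' l' =>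
      obtain ⟨rfl, hsl'⟩ := List.cons_prefix_cons.mp hbl
      obtain ⟨z, hz, hsz, hzl⟩ := h.1 l' (by simpa using hl) hsl'
      exact ⟨b :: z, ⟨z, hz, rfl⟩, List.cons_prefix_cons.mpr ⟨rfl, hsz⟩,
        List.cons_prefix_cons.mpr ⟨rfl, hzl⟩⟩
  · intro F' hF' hEnc'
    set F'' : Set V := {z | b :: z ∈ F'} with hF''def
    have hF'eq : F' = (b :: ·) '' F'' := by
      ext w
      constructor
      · intro hw
        obtain ⟨z, -, rfl⟩ := hF'.1 hw
        exact ⟨z, hw, rfl⟩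
      · rintro ⟨z, hz, rfl⟩
        exact hz
    have hF''sub : F'' ⊂ F := by
      constructor
      · intro z hz
        obtain ⟨z', hz', he⟩ := hF'.1 hz
        rwa [← List.cons_injective he]
      · intro hsub
        apply hF'.2
        intro w hw
        obtain ⟨z, hz, rfl⟩ := hw
        exact hF'eq ▸ ⟨z, hsub hz, rfl⟩
    refine h.2 F'' hF''sub ?_
    intro l hl hsl
    obtain ⟨z, hz, hsz, hzl⟩ := hEnc' (b :: l) (by simp [hl])
      (List.cons_prefix_cons.mpr ⟨rfl, hsl⟩)
    obtain ⟨z', hz', rfl⟩ := hF'eq ▸ hz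
    exact ⟨z', hz', (List.cons_prefix_cons.mp hsz).2, (List.cons_prefix_cons.mp hzl).2⟩
/-! ### Leaf sums -/

/-- Sum of `lam` over all leaves below `v`. -/
noncomputable def leafSum (p n : ℕ) (lam : V → ZMod p) (v : V) : ZMod p :=
  ∑ᶠ l ∈ {l : V | l.length = n ∧ v <+: l}, lam l

lemma leafSet_finite (n : ℕ) (v : V) : {l : V | l.length = n ∧ v <+: l}.Finite :=
  (treeSet_finite n).subset (fun l hl => le_of_eq hl.1)

lemma leafSum_split {p n : ℕ} (lam : V → ZMod p) {v : V} (hv : v.length < n) :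
    leafSum p n lam v = leafSum p n lam (v ++ [true]) + leafSum p n lam (v ++ [false]) := by
  unfold leafSum
  have hset : {l : V | l.length = n ∧ v <+: l} =
      {l : V | l.length = n ∧ v ++ [true] <+: l} ∪ {l : V | l.length = n ∧ v ++ [false] <+: l} := by
    ext l
    constructor
    · rintro ⟨hl, hvl⟩
      obtain ⟨b, hb⟩ := exists_child_prefix hvl (fun h' => by rw [h'] at hl; omega)
      cases b
      · exact Or.inr ⟨hl, hb⟩
      · exact Or.inl ⟨hl, hb⟩
    · rintro (⟨hl, hb⟩ | ⟨hl, hb⟩) <;>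
        exact ⟨hl, (List.prefix_append v _).trans hb⟩
  rw [hset, finsum_mem_union ?_ (leafSet_finite n _) (leafSet_finite n _)]
  rw [Set.disjoint_left]
  rintro l ⟨-, ht⟩ ⟨-, hf⟩
  have := eq_of_prefix_prefix_length ht hf (by simp)
  simp at this

lemma leafSum_cons {p n : ℕ} (lam : V → ZMod p) (b : Bool) (s : V) :
    leafSum p (n + 1) lam (b :: s) = leafSum p n (fun l => lam (b :: l)) s := by
  unfold leafSum
  have hset : {l : V | l.length = n + 1 ∧ b :: s <+: l} =
      (b :: ·) '' {l : V | l.length = n ∧ s <+: l} := by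
    ext l
    constructor
    · rintro ⟨hl, hbl⟩
      cases l with
      | nil => simp at hl
      | cons b' l' =>
        obtain ⟨rfl, hsl'⟩ := List.cons_prefix_cons.mp hbl
        exact ⟨l', ⟨by simpa using hl, hsl'⟩, rfl⟩
    · rintro ⟨l', ⟨hl', hsl'⟩, rfl⟩
      exact ⟨by simp [hl'], List.cons_prefix_cons.mpr ⟨rfl, hsl'⟩⟩
  rw [hset, finsum_mem_image (List.cons_injective.injOn)]

/-! ### Closure lemmas -/

lemma subset_cl (n : ℕ) (X : Set V) : X ⊆ cl n X :=
  fun x hx => Set.mem_sInter.mpr (fun _ hY => hY.1 hx)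

lemma tripleClosed_treeSet (n : ℕ) : TripleClosed n (treeSet n) := by
  intro x hx
  refine ⟨fun _ _ => ?_, fun _ _ => ?_, fun _ _ => ?_⟩ <;>
    simp [treeSet, List.length_append] <;> omega

lemma cl_subset_treeSet {n : ℕ} {X : Set V} (hX : X ⊆ treeSet n) :
    cl n X ⊆ treeSet n :=
  fun _ hx => hx (treeSet n) ⟨hX, le_refl _, tripleClosed_treeSet n⟩

lemma tripleClosed_cl (n : ℕ) (X : Set V) : TripleClosed n (cl n X) := by
  intro x hx
  refine ⟨fun h1 h2 => ?_, fun h1 h2 => ?_, fun h1 h2 => ?_⟩ <;>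
    · intro Y hY
      rcases (hY.2.2 x hx) with ⟨c1, c2, c3⟩
      first
        | exact c1 (h1 Y hY) (h2 Y hY)
        | exact c2 (h1 Y hY) (h2 Y hY)
        | exact c3 (h1 Y hY) (h2 Y hY)

/-! ### Consistent functions and cuts -/

/-- On a closed set, a consistent function's value at `v` is the sum over any
minimally enclosing subset; moreover the closed set must contain `v`. -/
lemma consistentOn_sum {n p : ℕ} {Y : Set V} (hYt : Y ⊆ treeSet n)
    (hYc : TripleClosed n Y) {σ : V → ZMod p} (hσ : ConsistentOn p Y σ) :
    ∀ m v F, n - v.length ≤ m → v.length ≤ n → F ⊆ Y → MinEncloses n F v →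
      v ∈ Y ∧ σ v = ∑ᶠ f ∈ F, σ f := by
  intro m
  induction m with
  | zero =>
    intro v F hm hv hFY hF
    have hvF : v ∈ F := by
      by_contra hvF
      have := hF.length_lt hv hvF
      omega
    rw [hF.eq_singleton_of_mem hvF, finsum_mem_singleton]
    exact ⟨hFY hvF, rfl⟩
  | succ m ih =>
    intro v F hm hv hFY hF
    by_cases hvF : v ∈ F
    · rw [hF.eq_singleton_of_mem hvF, finsum_mem_singleton]
      exact ⟨hFY hvF, rfl⟩
    · obtain ⟨hlt, hunion, hdisj, hmt, hmf⟩ := hF.split hv hvF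
      have hlent : (v ++ [true]).length ≤ n := by simp; omega
      have hlenf : (v ++ [false]).length ≤ n := by simp; omega
      have hmt' : n - (v ++ [true]).length ≤ m := by simp; omega
      have hmf' : n - (v ++ [false]).length ≤ m := by simp; omega
      obtain ⟨hvtY, hst⟩ := ih (v ++ [true]) _ hmt' hlent
        (fun f hf => hFY hf.1) hmt
      obtain ⟨hvfY, hsf⟩ := ih (v ++ [false]) _ hmf' hlenf
        (fun f hf => hFY hf.1) hmf
      have hvY : v ∈ Y := (hYc v hlt).2.2 hvtY hvfY
      refine ⟨hvY, ?_⟩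
      rw [hσ v hvY hvtY hvfY, hst, hsf, ← finsum_mem_union hdisj
        ((treeSet_finite n).subset (fun f hf => (hYt (hFY hf.1))))
        ((treeSet_finite n).subset (fun f hf => (hYt (hFY hf.1)))), ← hunion]

/-- Any two cuts (in `X`) of the same vertex have equal `ρ`-sums, given the
cut-sum conditions. -/
lemma cut_sums_eq {n p : ℕ} {X : Set V} (hX : X ⊆ treeSet n) {ρ : V → ZMod p}
    (hcut : ∀ x ∈ X, ∀ F, F ⊆ X → MinEncloses n F x → ρ x = ∑ᶠ f ∈ F, ρ f) :
    ∀ m v F1 F2, n - v.length ≤ m → v.length ≤ n → F1 ⊆ X → F2 ⊆ X →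
      MinEncloses n F1 v → MinEncloses n F2 v →
      ∑ᶠ f ∈ F1, ρ f = ∑ᶠ f ∈ F2, ρ f := by
  intro m
  induction m with
  | zero =>
    intro v F1 F2 hm hv h1X h2X h1 h2
    have hv1 : v ∈ F1 := by
      by_contra hvF; have := h1.length_lt hv hvF; omega
    have hv2 : v ∈ F2 := by
      by_contra hvF; have := h2.length_lt hv hvF; omega
    rw [h1.eq_singleton_of_mem hv1, h2.eq_singleton_of_mem hv2]
  | succ m ih =>
    intro v F1 F2 hm hv h1X h2X h1 h2
    by_cases hv1 : v ∈ F1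
    · rw [h1.eq_singleton_of_mem hv1, finsum_mem_singleton]
      exact hcut v (h1X hv1) F2 h2X h2
    · by_cases hv2 : v ∈ F2
      · rw [h2.eq_singleton_of_mem hv2, finsum_mem_singleton]
        exact (hcut v (h2X hv2) F1 h1X h1).symm
      · obtain ⟨hlt, hu1, hd1, hmt1, hmf1⟩ := h1.split hv hv1
        obtain ⟨-, hu2, hd2, hmt2, hmf2⟩ := h2.split hv hv2
        have hfin : ∀ F : Set V, F ⊆ X → F.Finite :=
          fun F hF => (treeSet_finite n).subset (fun f hf => hX (hF hf))
        have hlent : (v ++ [true]).length ≤ n := by simp; omega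
        have hlenf : (v ++ [false]).length ≤ n := by simp; omega
        have hmt' : n - (v ++ [true]).length ≤ m := by simp; omega
        have hmf' : n - (v ++ [false]).length ≤ m := by simp; omega
        have et := ih (v ++ [true]) _ _ hmt' hlent
          (fun f hf => h1X hf.1) (fun f hf => h2X hf.1) hmt1 hmt2
        have ef := ih (v ++ [false]) _ _ hmf' hlenf
          (fun f hf => h1X hf.1) (fun f hf => h2X hf.1) hmf1 hmf2
        rw [hu1, hu2, finsum_mem_union hd1 (hfin _ (fun f hf => h1X hf.1))
            (hfin _ (fun f hf => h1X hf.1)),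
          finsum_mem_union hd2 (hfin _ (fun f hf => h2X hf.1))
            (hfin _ (fun f hf => h2X hf.1)), et, ef]
/-! ### Existence of a leaf labelling -/

lemma exists_lam (p : ℕ) : ∀ n : ℕ, ∀ X : Set V, ∀ ρ : V → ZMod p, ∀ c : ZMod p,
    X ⊆ treeSet n →
    (∀ x ∈ X, ∀ F, F ⊆ X → MinEncloses n F x → ρ x = ∑ᶠ f ∈ F, ρ f) →
    (∀ F, F ⊆ X → MinEncloses n F [] → ∑ᶠ f ∈ F, ρ f = c) →
    ∃ lam : V → ZMod p,
      (∀ x ∈ X, leafSum p n lam x = ρ x) ∧ leafSum p n lam [] = c := by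
  intro n
  induction n with
  | zero =>
    intro X ρ c hX hcut hroot
    refine ⟨fun _ => c, ?_, ?_⟩
    · intro x hx
      have hx0 : x = [] := List.length_eq_zero_iff.mp (Nat.le_zero.mp (hX hx))
      subst hx0
      have h1 : ρ [] = c := by
        have := hroot {[]} (Set.singleton_subset_iff.mpr hx)
          (minEncloses_singleton (by simp))
        rwa [finsum_mem_singleton] at this
      rw [← h1]
      unfold leafSum
      have : {l : V | l.length = 0 ∧ [] <+: l} = {[]} := by
        ext l; simp [List.length_eq_zero_iff]
      rw [this, finsum_mem_singleton]
    · unfold leafSum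
      have : {l : V | l.length = 0 ∧ [] <+: l} = {([] : V)} := by
        ext l; simp [List.length_eq_zero_iff]
      rw [this, finsum_mem_singleton]
  | succ n ih =>
    intro X ρ c hX hcut hroot
    -- the two subtrees
    set Xt : Set V := {s | true :: s ∈ X} with hXtdef
    set Xf : Set V := {s | false :: s ∈ X} with hXfdef
    have hXb : ∀ b : Bool, {s : V | b :: s ∈ X} ⊆ treeSet n := by
      intro b s hs
      have := hX hs
      simpa [treeSet] using this
    have himgsub : ∀ (b : Bool) (F : Set V), F ⊆ {s : V | b :: s ∈ X} →
        (b :: ·) '' F ⊆ X := by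
      rintro b F hF w ⟨z, hz, rfl⟩
      exact hF hz
    have hcutb : ∀ b : Bool, ∀ s ∈ {s : V | b :: s ∈ X}, ∀ F,
        F ⊆ {s : V | b :: s ∈ X} → MinEncloses n F s →
        ρ (b :: s) = ∑ᶠ f ∈ F, ρ (b :: f) := by
      intro b s hs F hFsub hF
      have := hcut (b :: s) hs ((b :: ·) '' F) (himgsub b F hFsub) (hF.lift b)
      rwa [finsum_mem_image (List.cons_injective.injOn)] at this
    -- lifting root cuts of the two subtrees to a root cut of the whole tree
    have hglue : ∀ (Ft Ff : Set V), Ft ⊆ Xt → Ff ⊆ Xf →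
        MinEncloses n Ft [] → MinEncloses n Ff [] →
        (∑ᶠ f ∈ Ft, ρ (true :: f)) + (∑ᶠ f ∈ Ff, ρ (false :: f)) = c := by
      intro Ft Ff hFtX hFfX hFt hFf
      have hlt := hFt.lift true
      have hlf := hFf.lift false
      have hG : MinEncloses (n + 1) ((true :: ·) '' Ft ∪ (false :: ·) '' Ff) [] := by
        have := MinEncloses.glue (v := []) (n := n + 1) (by simp) hlt hlf
        simpa using this
      have hGsub : (true :: ·) '' Ft ∪ (false :: ·) '' Ff ⊆ X :=
        Set.union_subset (himgsub true Ft hFtX) (himgsub false Ff hFfX)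
      have hsum := hroot _ hGsub hG
      have hdisj : Disjoint ((true :: ·) '' Ft) ((false :: ·) '' Ff) := by
        rw [Set.disjoint_left]
        rintro w ⟨z, hz, rfl⟩ ⟨z', hz', heq⟩
        simp at heq
      rw [finsum_mem_union hdisj
          ((treeSet_finite (n+1)).subset (fun f hf => hX (himgsub true Ft hFtX hf)))
          ((treeSet_finite (n+1)).subset (fun f hf => hX (himgsub false Ff hFfX hf))),
        finsum_mem_image (List.cons_injective.injOn),
        finsum_mem_image (List.cons_injective.injOn)] at hsum
      exact hsum
    -- choose target subtree root sums
    have hcc : ∃ ct cf : ZMod p, ct + cf = c ∧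
        (∀ F, F ⊆ Xt → MinEncloses n F [] → ∑ᶠ f ∈ F, ρ (true :: f) = ct) ∧
        (∀ F, F ⊆ Xf → MinEncloses n F [] → ∑ᶠ f ∈ F, ρ (false :: f) = cf) := by
      by_cases hT : ∃ F, F ⊆ Xt ∧ MinEncloses n F []
      · obtain ⟨F0, hF0X, hF0⟩ := hT
        refine ⟨∑ᶠ f ∈ F0, ρ (true :: f), c - ∑ᶠ f ∈ F0, ρ (true :: f),
          by ring, ?_, ?_⟩
        · intro F hFX hF
          exact cut_sums_eq (hXb true) (hcutb true ·) n [] F F0 (by simp) (by simp)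
            hFX hF0X hF hF0
        · intro F hFX hF
          have := hglue F0 F hF0X hFX hF0 hF
          rw [← this]; ring
      · by_cases hF' : ∃ F, F ⊆ Xf ∧ MinEncloses n F []
        · obtain ⟨F0, hF0X, hF0⟩ := hF'
          refine ⟨c - ∑ᶠ f ∈ F0, ρ (false :: f), ∑ᶠ f ∈ F0, ρ (false :: f),
            by ring, ?_, ?_⟩
          · intro F hFX hF
            exact absurd ⟨F, hFX, hF⟩ hT
          · intro F hFX hF
            exact cut_sums_eq (hXb false) (hcutb false ·) n [] F F0 (by simp) (by simp)
              hFX hF0X hF hF0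
        · exact ⟨c, 0, by ring,
            fun F hFX hF => absurd ⟨F, hFX, hF⟩ hT,
            fun F hFX hF => absurd ⟨F, hFX, hF⟩ hF'⟩
    obtain ⟨ct, cf, hctcf, hprt, hprf⟩ := hcc
    obtain ⟨lamt, hlamt, hlamtroot⟩ := ih Xt (fun s => ρ (true :: s)) ct
      (hXb true) (hcutb true ·) hprt
    obtain ⟨lamf, hlamf, hlamfroot⟩ := ih Xf (fun s => ρ (false :: s)) cf
      (hXb false) (hcutb false ·) hprf
    refine ⟨fun l => match l with
      | [] => 0
      | true :: l' => lamt l'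
      | false :: l' => lamf l', ?_, ?_⟩
    · intro x hx
      match x with
      | [] =>
        rw [leafSum_split _ (by simp : ([] : V).length < n + 1)]
        have e1 : (([] : V) ++ [true]) = true :: ([] : V) := by simp
        have e2 : (([] : V) ++ [false]) = false :: ([] : V) := by simp
        rw [e1, e2, leafSum_cons, leafSum_cons]
        have h1 : ρ [] = c := by
          have := hroot {[]} (Set.singleton_subset_iff.mpr hx)
            (minEncloses_singleton (by simp))
          rwa [finsum_mem_singleton] at this
        rw [h1, ← hctcf, ← hlamtroot, ← hlamfroot]
      | true :: s =>
        rw [leafSum_cons]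
        exact hlamt s hx
      | false :: s =>
        rw [leafSum_cons]
        exact hlamf s hx
    · rw [leafSum_split _ (by simp : ([] : V).length < n + 1)]
      have e1 : (([] : V) ++ [true]) = true :: ([] : V) := by simp
      have e2 : (([] : V) ++ [false]) = false :: ([] : V) := by simp
      rw [e1, e2, leafSum_cons, leafSum_cons, ← hctcf, ← hlamtroot, ← hlamfroot]
/-- for an arbitrary set `X`, `ρ : X → Z/pZ` is consistent
(i.e. extends to a consistent function on `cl(X)`) if and only if for every
`x ∈ X` and every `F ⊆ X` minimally enclosing `x`, `ρ(x) = Σ_{y ∈ F} ρ(y)`. -/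
theorem stmt_4 (n p : ℕ) (hp : p.Prime) (X : Set V) (hX : X ⊆ treeSet n)
    (ρ : V → ZMod p) :
    Consistent n p X ρ ↔
      ∀ x ∈ X, ∀ F : Set V, F ⊆ X → MinEncloses n F x → ρ x = ∑ᶠ y ∈ F, ρ y := by
  constructor
  · rintro ⟨ρ', hcons, hext⟩ x hx F hFX hF
    have h := (consistentOn_sum (cl_subset_treeSet hX) (tripleClosed_cl n X) hcons
      n x F (by omega) (hX hx) (fun f hf => subset_cl n X (hFX hf)) hF).2
    rw [← hext x hx, h]
    exact finsum_mem_congr rfl (fun f hf => hext f (hFX hf))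
  · intro hcut
    have hc : ∃ c : ZMod p, ∀ F, F ⊆ X → MinEncloses n F [] →
        ∑ᶠ f ∈ F, ρ f = c := by
      by_cases hR : ∃ F, F ⊆ X ∧ MinEncloses n F []
      · obtain ⟨F0, hF0X, hF0⟩ := hR
        exact ⟨∑ᶠ f ∈ F0, ρ f, fun F hFX hF =>
          cut_sums_eq hX (fun x hx F hFX hF => hcut x hx F hFX hF) n [] F F0
            (by simp) (by simp) hFX hF0X hF hF0⟩
      · exact ⟨0, fun F hFX hF => absurd ⟨F, hFX, hF⟩ hR⟩
    obtain ⟨c, hroot⟩ := hc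
    obtain ⟨lam, hlam, -⟩ := exists_lam p n X ρ c hX
      (fun x hx F hFX hF => hcut x hx F hFX hF) hroot
    refine ⟨leafSum p n lam, ?_, fun x hx => hlam x hx⟩
    intro x hx hxt hxf
    have hlen : x.length < n := by
      have := cl_subset_treeSet hX hxt
      simp [treeSet] at this
      omega
    exact leafSum_split lam hlen
end

section
/- Let p be a prime, α a set, f : α → α a bijection satisfying f^p = id (f composed with itself p times is the identity), and let ~ be an equivalence relation on α such that for all x, y ∈ α, x ~ y holds if and only if f(x) ~ f(y). If for some a ∈ α there exist d₁, d₂ ∈ {0, 1, …, p−1} with d₁ ≠ d₂ and f^{d₁}(a) ~ f^{d₂}(a), then f(a) ~ a. -/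
section aux

variable {α : Type*} (f : Equiv.Perm α) (R : α → α → Prop)

private lemma stmt8_shift (hcong : ∀ x y : α, R x y ↔ R (f x) (f y)) :
    ∀ (n : ℕ) (x y : α), R x y ↔ R ((f ^ n) x) ((f ^ n) y) := by
  intro n
  induction n with
  | zero => simp
  | succ n ih =>
    intro x y
    rw [hcong x y, ih (f x) (f y)]
    simp [pow_succ, Equiv.Perm.mul_apply]

private lemma stmt8_chain (hR : Equivalence R)
    (hcong : ∀ x y : α, R x y ↔ R (f x) (f y))
    (a : α) (d : ℕ) (hd : R a ((f ^ d) a)) :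
    ∀ m : ℕ, R a ((f ^ (d * m)) a) := by
  intro m
  induction m with
  | zero => simpa using hR.refl a
  | succ m ih =>
    have h2 : R ((f ^ (d * m)) a) ((f ^ (d * m)) ((f ^ d) a)) :=
      (stmt8_shift f R hcong (d * m) a ((f ^ d) a)).mp hd
    have : R a ((f ^ (d * m)) ((f ^ d) a)) := hR.trans ih h2
    have hpow : (f ^ (d * (m + 1))) a = (f ^ (d * m)) ((f ^ d) a) := by
      rw [Nat.mul_succ, pow_add]
      rfl
    rwa [hpow]

private lemma stmt8_main (p : ℕ) (hp : p.Prime)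
    (hfp : f ^ p = 1) (hR : Equivalence R)
    (hcong : ∀ x y : α, R x y ↔ R (f x) (f y))
    (a : α) (d : ℕ) (hd0 : 0 < d) (hdp : d < p)
    (h : R a ((f ^ d) a)) : R (f a) a := by
  have hcop : Nat.Coprime d p :=
    (Nat.coprime_comm.mp (hp.coprime_iff_not_dvd.mpr (fun hdvd => by
      have := Nat.le_of_dvd hd0 hdvd; omega)))
  obtain ⟨m, -, hm⟩ := Nat.exists_mul_mod_eq_one_of_coprime hcop hp.one_lt
  have hchain := stmt8_chain f R hR hcong a d h m
  have hpow : f ^ (d * m) = f := by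
    conv_lhs => rw [← Nat.div_add_mod (d * m) p, hm, pow_add, pow_mul, hfp]
    simp
  rw [hpow] at hchain
  exact hR.symm hchain

end aux

/-- let `p` be prime, `f` a bijection of a set `α` with
`f^p = id`, and `R` an equivalence relation such that `R x y ↔ R (f x) (f y)`.
If `f^{d₁} a` and `f^{d₂} a` are related for some distinct `d₁, d₂ < p`, then
`f a` is related to `a`. -/
theorem stmt_8 {α : Type*} (p : ℕ) (hp : p.Prime) (f : Equiv.Perm α)
    (hfp : f ^ p = 1) (R : α → α → Prop) (hR : Equivalence R)
    (hcong : ∀ x y : α, R x y ↔ R (f x) (f y))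
    (a : α) (d₁ d₂ : ℕ) (hd₁ : d₁ < p) (hd₂ : d₂ < p) (hne : d₁ ≠ d₂)
    (h : R ((f ^ d₁) a) ((f ^ d₂) a)) : R (f a) a := by
  rcases hne.lt_or_gt with hlt | hlt
  · have key : R a ((f ^ (d₂ - d₁)) a) := by
      have := (stmt8_shift f R hcong d₁ a ((f ^ (d₂ - d₁)) a)).symm
      apply this.mp
      have : (f ^ d₁) ((f ^ (d₂ - d₁)) a) = (f ^ d₂) a := by
        rw [← Equiv.Perm.mul_apply, ← pow_add, Nat.add_sub_cancel' hlt.le]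
      rwa [this]
    exact stmt8_main f R p hp hfp hR hcong a (d₂ - d₁) (by omega) (by omega) key
  · have key : R a ((f ^ (d₁ - d₂)) a) := by
      have := (stmt8_shift f R hcong d₂ a ((f ^ (d₁ - d₂)) a)).symm
      apply this.mp
      have heq : (f ^ d₂) ((f ^ (d₁ - d₂)) a) = (f ^ d₁) a := by
        rw [← Equiv.Perm.mul_apply, ← pow_add, Nat.add_sub_cancel' hlt.le]
      rw [heq]
      exact hR.symm h
    exact stmt8_main f R p hp hfp hR hcong a (d₁ - d₂) (by omega) (by omega) key
end
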